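/- arXiv:1908.08616 — 2 statements merged into one kernel-verified Lean document; each statement's English description precedes it below -/
import Mathlib

section
/- If a convex quadratic function q(x) = (1/2) xᵀQx + bᵀx (with Q symmetric positive semidefinite) is bounded from below on a nonempty polyhedron {x : Ax ≥ c}, then q attains its infimum on this polyhedron. -/
open Matrix Finset

section FrankWolfeAux

open Filter

noncomputable def objf {p : ℕ} (Q : Matrix (Fin p) (Fin p) ℝ) (b : Fin p → ℝ) (x : Fin p → ℝ) : ℝ :=
  (1/2) * (x ⬝ᵥ Q.mulVec x) + b ⬝ᵥ x

noncomputable def dotLin {p : ℕ} (d : Fin p → ℝ) : (Fin p → ℝ) →ₗ[ℝ] ℝ where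
  toFun := fun x => d ⬝ᵥ x
  map_add' := fun x y => dotProduct_add d x y
  map_smul' := fun r x => by simp [dotProduct_smul, smul_eq_mul]

lemma cont_dot {p : ℕ} (a : Fin p → ℝ) : Continuous fun v : Fin p → ℝ => a ⬝ᵥ v := by
  simp only [dotProduct]; fun_prop

lemma cont_quad {p : ℕ} (Q : Matrix (Fin p) (Fin p) ℝ) :
    Continuous fun v : Fin p → ℝ => v ⬝ᵥ Q.mulVec v := by
  simp only [dotProduct, Matrix.mulVec]; fun_prop

lemma cont_obj {p : ℕ} (Q : Matrix (Fin p) (Fin p) ℝ) (b : Fin p → ℝ) :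
    Continuous (objf Q b) := by
  unfold objf; simp only [dotProduct, Matrix.mulVec]; fun_prop

lemma psd_kernel {p : ℕ} {Q : Matrix (Fin p) (Fin p) ℝ} (hQ : Q.PosSemidef) {d : Fin p → ℝ}
    (h : d ⬝ᵥ Q.mulVec d ≤ 0) : Q.mulVec d = 0 := by
  rw [← hQ.dotProduct_mulVec_zero_iff]
  simp only [star_trivial]
  exact le_antisymm h (by simpa using hQ.dotProduct_mulVec_nonneg d)

lemma dot_self_pos {p : ℕ} {d : Fin p → ℝ} (h : d ≠ 0) : 0 < d ⬝ᵥ d := by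
  have h0 : 0 ≤ d ⬝ᵥ d := Finset.sum_nonneg fun i _ => mul_self_nonneg _
  rcases h0.lt_or_eq with h'|h'
  · exact h'
  · exact absurd (dotProduct_self_eq_zero.mp h'.symm) h

lemma dot_mulVec_symm {p : ℕ} {Q : Matrix (Fin p) (Fin p) ℝ} (hQ : Q.PosSemidef)
    (v w : Fin p → ℝ) : v ⬝ᵥ Q.mulVec w = Q.mulVec v ⬝ᵥ w := by
  have hsym : Qᵀ = Q := by
    have := hQ.1.eq
    simpa [Matrix.conjTranspose_eq_transpose_of_trivial] using this
  rw [Matrix.dotProduct_mulVec]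
  conv_lhs => rw [← hsym, Matrix.vecMul_transpose]

lemma obj_add_smul {p : ℕ} {Q : Matrix (Fin p) (Fin p) ℝ} (hQ : Q.PosSemidef)
    (b : Fin p → ℝ) {d : Fin p → ℝ} (hd : Q.mulVec d = 0) (x : Fin p → ℝ) (t : ℝ) :
    objf Q b (x + t • d) = objf Q b x + t * (b ⬝ᵥ d) := by
  have h1 : Q.mulVec (x + t • d) = Q.mulVec x := by
    rw [Matrix.mulVec_add, Matrix.mulVec_smul, hd]; simp
  have h2 : d ⬝ᵥ Q.mulVec x = 0 := by
    rw [dot_mulVec_symm hQ, hd, zero_dotProduct]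
  unfold objf
  rw [h1, add_dotProduct, smul_dotProduct, dotProduct_add, h2]
  simp [smul_eq_mul]
  ring

/-- Extraction of an asymptotic (recession) direction from an unbounded minimizing
sequence. -/
lemma extract_dir {p : ℕ} (Q : Matrix (Fin p) (Fin p) ℝ) (hQ : Q.PosSemidef) (b : Fin p → ℝ)
    (r : ℕ) (a : Fin r → Fin p → ℝ) (c : Fin r → ℝ) (m : ℝ)
    (V : Submodule ℝ (Fin p → ℝ)) (x1 : Fin p → ℝ)
    (hV : ∀ x y, (∀ i, c i ≤ a i ⬝ᵥ x) → (∀ i, c i ≤ a i ⬝ᵥ y) → x - y ∈ V)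
    (hx1 : ∀ i, c i ≤ a i ⬝ᵥ x1)
    (xs : ℕ → (Fin p → ℝ)) (hxsF : ∀ k, ∀ i, c i ≤ a i ⬝ᵥ xs k)
    (hxs : ∀ k, objf Q b (xs k) < m + 1 / (k + 1))
    (hnorm : Tendsto (fun k => ‖xs k‖) atTop atTop) :
    ∃ d : Fin p → ℝ, d ≠ 0 ∧ d ∈ V ∧ (∀ i, 0 ≤ a i ⬝ᵥ d) ∧
      d ⬝ᵥ Q.mulVec d ≤ 0 ∧ b ⬝ᵥ d ≤ 0 := by
  classical
  set u : ℕ → (Fin p → ℝ) := fun k => ‖xs k‖⁻¹ • xs k with hu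
  have huball : ∀ k, u k ∈ Metric.closedBall (0 : Fin p → ℝ) 1 := by
    intro k
    rw [mem_closedBall_zero_iff, hu]
    rcases eq_or_ne (xs k) 0 with h | h
    · simp [h]
    · rw [norm_smul, norm_inv, norm_norm, inv_mul_cancel₀ (norm_ne_zero_iff.mpr h)]
  obtain ⟨d, _, ψ, hψmono, hψ⟩ := (isCompact_closedBall (0 : Fin p → ℝ) 1).tendsto_subseq huball
  have hψ' : Tendsto (fun j => u (ψ j)) atTop (nhds d) := hψ
  have hnormψ : Tendsto (fun j => ‖xs (ψ j)‖) atTop atTop := hnorm.comp hψmono.tendsto_atTop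
  have hinvψ : Tendsto (fun j => ‖xs (ψ j)‖⁻¹) atTop (nhds 0) := hnormψ.inv_tendsto_atTop
  have hev : ∀ᶠ j in atTop, 1 ≤ ‖xs (ψ j)‖ := hnormψ.eventually_ge_atTop 1
  have hd1 : ‖d‖ = 1 := by
    have h1 : Tendsto (fun j => ‖u (ψ j)‖) atTop (nhds ‖d‖) :=
      (continuous_norm.tendsto d).comp hψ'
    have h2 : (fun j => ‖u (ψ j)‖) =ᶠ[atTop] fun _ => (1 : ℝ) := by
      filter_upwards [hev] with j hj
      have hne : xs (ψ j) ≠ 0 := by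
        intro h0; rw [h0] at hj; simp at hj; linarith
      rw [hu]; dsimp only
      rw [norm_smul, norm_inv, norm_norm, inv_mul_cancel₀ (norm_ne_zero_iff.mpr hne)]
    exact tendsto_nhds_unique (h1.congr' h2) tendsto_const_nhds
  have hdne : d ≠ 0 := fun h => by rw [h, norm_zero] at hd1; linarith
  have hdV : d ∈ V := by
    have hmem : ∀ j, u (ψ j) - ‖xs (ψ j)‖⁻¹ • x1 ∈ (V : Set (Fin p → ℝ)) := by
      intro j
      have : u (ψ j) - ‖xs (ψ j)‖⁻¹ • x1 = ‖xs (ψ j)‖⁻¹ • (xs (ψ j) - x1) := by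
        rw [smul_sub]
      rw [this]
      exact V.smul_mem _ (hV _ _ (hxsF (ψ j)) hx1)
    have htend : Tendsto (fun j => u (ψ j) - ‖xs (ψ j)‖⁻¹ • x1) atTop (nhds d) := by
      have := hψ'.sub (hinvψ.smul_const x1)
      simpa using this
    exact (Submodule.closed_of_finiteDimensional V).mem_of_tendsto htend
      (Eventually.of_forall hmem)
  have hAd : ∀ i, 0 ≤ a i ⬝ᵥ d := by
    intro i
    have h1 : Tendsto (fun j => a i ⬝ᵥ u (ψ j)) atTop (nhds (a i ⬝ᵥ d)) :=
      ((cont_dot (a i)).tendsto d).comp hψ'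
    have h2 : Tendsto (fun j => ‖xs (ψ j)‖⁻¹ * c i) atTop (nhds 0) := by
      simpa using hinvψ.mul_const (c i)
    refine le_of_tendsto_of_tendsto h2 h1 ?_
    filter_upwards [hev] with j hj
    have hrpos : (0:ℝ) ≤ ‖xs (ψ j)‖⁻¹ := inv_nonneg.mpr (norm_nonneg _)
    have : a i ⬝ᵥ u (ψ j) = ‖xs (ψ j)‖⁻¹ * (a i ⬝ᵥ xs (ψ j)) := by
      rw [hu]; dsimp only; rw [dotProduct_smul]; simp [smul_eq_mul]
    rw [this]
    exact mul_le_mul_of_nonneg_left (hxsF (ψ j) i) hrpos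
  have hobj_bound : ∀ k, objf Q b (xs k) < m + 1 := by
    intro k
    have h1 : (1:ℝ) / (k + 1) ≤ 1 := by
      rw [div_le_one (by positivity)]
      have : (0:ℝ) ≤ (k:ℝ) := Nat.cast_nonneg k
      linarith
    have := hxs k
    linarith
  have hquad : ∀ k, u k ⬝ᵥ Q.mulVec (u k) = (‖xs k‖⁻¹)^2 * (xs k ⬝ᵥ Q.mulVec (xs k)) := by
    intro k
    rw [hu]; dsimp only
    rw [smul_dotProduct, Matrix.mulVec_smul, dotProduct_smul]
    simp [smul_eq_mul]; ring
  have hblin : ∀ k, b ⬝ᵥ u k = ‖xs k‖⁻¹ * (b ⬝ᵥ xs k) := by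
    intro k
    rw [hu]; dsimp only; rw [dotProduct_smul]; simp [smul_eq_mul]
  have hbd : b ⬝ᵥ d ≤ 0 := by
    have h1 : Tendsto (fun j => b ⬝ᵥ u (ψ j)) atTop (nhds (b ⬝ᵥ d)) :=
      ((cont_dot b).tendsto d).comp hψ'
    have h2 : Tendsto (fun j => ‖xs (ψ j)‖⁻¹ * (m + 1)) atTop (nhds 0) := by
      simpa using hinvψ.mul_const (m + 1)
    refine le_of_tendsto_of_tendsto h1 h2 ?_
    filter_upwards [hev] with j hj
    have hrpos : (0:ℝ) ≤ ‖xs (ψ j)‖⁻¹ := inv_nonneg.mpr (norm_nonneg _)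
    rw [hblin]
    apply mul_le_mul_of_nonneg_left _ hrpos
    have hq := hQ.dotProduct_mulVec_nonneg (xs (ψ j))
    have := hobj_bound (ψ j)
    unfold objf at this
    simp only [star_trivial] at hq
    linarith
  have hdQd : d ⬝ᵥ Q.mulVec d ≤ 0 := by
    have h1 : Tendsto (fun j => u (ψ j) ⬝ᵥ Q.mulVec (u (ψ j)) + ‖xs (ψ j)‖⁻¹ * (2 * (b ⬝ᵥ u (ψ j))))
        atTop (nhds (d ⬝ᵥ Q.mulVec d + 0 * (2 * (b ⬝ᵥ d)))) := by
      exact (((cont_quad Q).tendsto d).comp hψ').add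
        (hinvψ.mul ((((cont_dot b).tendsto d).comp hψ').const_mul 2))
    rw [zero_mul, add_zero] at h1
    have h2 : Tendsto (fun j => 2 * (m + 1) * (‖xs (ψ j)‖⁻¹)^2) atTop (nhds 0) := by
      have := (hinvψ.mul hinvψ).const_mul (2 * (m + 1))
      simpa [pow_two] using this
    refine le_of_tendsto_of_tendsto h1 h2 ?_
    filter_upwards [hev] with j hj
    have hrpos : (0:ℝ) < ‖xs (ψ j)‖⁻¹ := inv_pos.mpr (by linarith)
    have hb := hobj_bound (ψ j)
    unfold objf at hb
    rw [hquad, hblin]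
    have h3 : (‖xs (ψ j)‖⁻¹)^2 * (2 * ((1:ℝ)/2 * (xs (ψ j) ⬝ᵥ Q.mulVec (xs (ψ j))) + b ⬝ᵥ xs (ψ j)))
        ≤ (‖xs (ψ j)‖⁻¹)^2 * (2 * (m + 1)) := by
      apply mul_le_mul_of_nonneg_left _ (le_of_lt (by positivity))
      linarith
    calc (‖xs (ψ j)‖⁻¹)^2 * (xs (ψ j) ⬝ᵥ Q.mulVec (xs (ψ j)))
          + ‖xs (ψ j)‖⁻¹ * (2 * (‖xs (ψ j)‖⁻¹ * (b ⬝ᵥ xs (ψ j))))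
        = (‖xs (ψ j)‖⁻¹)^2 * (2 * ((1:ℝ)/2 * (xs (ψ j) ⬝ᵥ Q.mulVec (xs (ψ j))) + b ⬝ᵥ xs (ψ j))) := by
          ring
      _ ≤ (‖xs (ψ j)‖⁻¹)^2 * (2 * (m + 1)) := h3
      _ = 2 * (m + 1) * (‖xs (ψ j)‖⁻¹)^2 := by ring
  exact ⟨d, hdne, hdV, hAd, hdQd, hbd⟩

/-- The key induction (on the dimension of a subspace containing all differences of
feasible points): a convex quadratic bounded below on a nonempty polyhedron attains
its minimum. -/
lemma frank_wolfe_key (p : ℕ) (Q : Matrix (Fin p) (Fin p) ℝ) (hQ : Q.PosSemidef) (b : Fin p → ℝ) :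
    ∀ (n : ℕ) (V : Submodule ℝ (Fin p → ℝ)), Module.finrank ℝ V ≤ n →
    ∀ (r : ℕ) (a : Fin r → Fin p → ℝ) (c : Fin r → ℝ),
    (∀ x y, (∀ i, c i ≤ a i ⬝ᵥ x) → (∀ i, c i ≤ a i ⬝ᵥ y) → x - y ∈ V) →
    (∃ x0, ∀ i, c i ≤ a i ⬝ᵥ x0) →
    (∃ L, ∀ x, (∀ i, c i ≤ a i ⬝ᵥ x) → L ≤ objf Q b x) →
    ∃ xstar, (∀ i, c i ≤ a i ⬝ᵥ xstar) ∧
      ∀ x, (∀ i, c i ≤ a i ⬝ᵥ x) → objf Q b xstar ≤ objf Q b x := by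
  intro n
  induction n with
  | zero =>
    intro V hV0 r a c hV hne _
    obtain ⟨x1, hx1⟩ := hne
    refine ⟨x1, hx1, fun x hx => ?_⟩
    have hVbot : V = ⊥ := Submodule.finrank_eq_zero.mp (Nat.le_zero.mp hV0)
    have h0 : x - x1 = 0 := by
      have := hV x x1 hx hx1
      rwa [hVbot, Submodule.mem_bot] at this
    rw [sub_eq_zero.mp h0]
  | succ n ih =>
    intro V hVn r a c hV hne hbdd
    classical
    obtain ⟨x1, hx1⟩ := hne
    obtain ⟨L, hL⟩ := hbdd
    set f := objf Q b with hf
    set F : Set (Fin p → ℝ) := {x | ∀ i, c i ≤ a i ⬝ᵥ x} with hF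
    have hx1F : x1 ∈ F := hx1
    have hFne : (f '' F).Nonempty := ⟨f x1, x1, hx1F, rfl⟩
    have hFbdd : BddBelow (f '' F) := ⟨L, by rintro y ⟨x, hx, rfl⟩; exact hL x hx⟩
    set m := sInf (f '' F) with hm
    have hm_le : ∀ x, x ∈ F → m ≤ f x := fun x hx => csInf_le hFbdd ⟨x, hx, rfl⟩
    have hseq : ∀ k : ℕ, ∃ x, x ∈ F ∧ f x < m + 1 / (k + 1) := by
      intro k
      have hpos : (0 : ℝ) < 1 / (k + 1) := by positivity
      obtain ⟨y, ⟨x, hx, rfl⟩, hy⟩ := exists_lt_of_csInf_lt hFne (by linarith : m < m + 1/(k+1))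
      exact ⟨x, hx, hy⟩
    choose xs hxsF hxs using hseq
    by_cases hb : ∃ C : ℝ, ∀ j : ℕ, ∃ k, j ≤ k ∧ ‖xs k‖ ≤ C
    · -- bounded case: extract a convergent minimizing subsequence
      obtain ⟨C, hC⟩ := hb
      choose g hg1 hg2 using hC
      let φ : ℕ → ℕ := fun j => Nat.rec (g 0) (fun _ prev => g (prev + 1)) j
      have hφs : ∀ j, φ (j + 1) = g (φ j + 1) := fun j => rfl
      have hφmono : StrictMono φ :=
        strictMono_nat_of_lt_succ fun j =>
          lt_of_lt_of_le (Nat.lt_succ_self _) (by rw [hφs]; exact hg1 _)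
      have hφC : ∀ j, ‖xs (φ j)‖ ≤ C := by
        intro j
        cases j with
        | zero => exact hg2 0
        | succ j => rw [hφs]; exact hg2 _
      have hcpt : IsCompact (Metric.closedBall (0 : Fin p → ℝ) C) := isCompact_closedBall _ _
      obtain ⟨z, _, ψ, hψmono, hψtend⟩ :=
        hcpt.tendsto_subseq (x := fun j => xs (φ j))
          (fun j => by simpa [mem_closedBall_zero_iff] using hφC j)
      have hzF : z ∈ F := by
        rw [hF]
        intro i
        have htd : Tendsto (fun j => a i ⬝ᵥ xs (φ (ψ j))) atTop (nhds (a i ⬝ᵥ z)) :=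
          ((cont_dot (a i)).tendsto z).comp hψtend
        refine ge_of_tendsto' htd fun j => ?_
        exact hxsF (φ (ψ j)) i
      refine ⟨z, hzF, fun x hx => le_trans ?_ (hm_le x hx)⟩
      have htd : Tendsto (fun j => f (xs (φ (ψ j)))) atTop (nhds (f z)) :=
        ((cont_obj Q b).tendsto z).comp hψtend
      have hbnd : Tendsto (fun j : ℕ => m + 1 / ((j : ℝ) + 1)) atTop (nhds m) := by
        have h0 : Tendsto (fun j : ℕ => 1 / ((j : ℝ) + 1)) atTop (nhds 0) :=
          tendsto_one_div_add_atTop_nhds_zero_nat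
        have := (tendsto_const_nhds (x := m) (f := atTop (α := ℕ))).add h0
        simpa using this
      refine le_of_tendsto_of_tendsto htd hbnd (Eventually.of_forall fun j => ?_)
      obtain ⟨k, hk, hle⟩ : ∃ k : ℕ, k = φ (ψ j) ∧ j ≤ k :=
        ⟨φ (ψ j), rfl, le_trans (hψmono.le_apply) (hφmono.le_apply)⟩
      have hle' : (j : ℝ) ≤ (k : ℝ) := Nat.cast_le.mpr hle
      have h1 : (1 : ℝ) / ((k : ℝ) + 1) ≤ 1 / ((j : ℝ) + 1) := by
        apply one_div_le_one_div_of_le (by positivity)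
        linarith
      have h2 := hxs k
      dsimp only
      rw [← hk]
      linarith
    · -- unbounded case: extract a recession direction d
      push_neg at hb
      have hnorm : Tendsto (fun k => ‖xs k‖) atTop atTop := by
        rw [tendsto_atTop]
        intro C
        obtain ⟨j, hj⟩ := hb C
        exact eventually_atTop.2 ⟨j, fun k hk => (hj k hk).le⟩
      obtain ⟨d, hdne, hdV, hAd, hdQd, hbdle⟩ :=
        extract_dir Q hQ b r a c m V x1 hV hx1 xs hxsF hxs hnorm
      have hQd : Q.mulVec d = 0 := psd_kernel hQ hdQd
      have hbdge : 0 ≤ b ⬝ᵥ d := by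
        by_contra hneg
        push_neg at hneg
        have hLx1 : L ≤ f x1 := hL x1 hx1
        set t := (L - f x1 - 1) / (b ⬝ᵥ d) with ht
        have htpos : 0 < t := div_pos_of_neg_of_neg (by linarith) hneg
        have hmem : ∀ i, c i ≤ a i ⬝ᵥ (x1 + t • d) := by
          intro i
          rw [dotProduct_add, dotProduct_smul]
          have h1 := mul_nonneg htpos.le (hAd i)
          have h2 := hx1 i
          simp only [smul_eq_mul]
          linarith
        have hobj := obj_add_smul hQ b hQd x1 t
        have ht2 : t * (b ⬝ᵥ d) = L - f x1 - 1 := div_mul_cancel₀ _ (ne_of_lt hneg)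
        have h4 := hL _ hmem
        have h5 : f (x1 + t • d) = f x1 + t * (b ⬝ᵥ d) := hobj
        rw [h5, ht2] at h4
        linarith
      have hbd0 : b ⬝ᵥ d = 0 := le_antisymm hbdle hbdge
      have hobjd : ∀ x t, f (x + t • d) = f x := fun x t => by
        rw [hf, obj_add_smul hQ b hQd, hbd0, mul_zero, add_zero]
      by_cases hcase : ∀ i, a i ⬝ᵥ d ≤ 0
      · -- case A: A d = 0, cut with the hyperplane d ⬝ᵥ x = d ⬝ᵥ x1
        have haz : ∀ i, a i ⬝ᵥ d = 0 := fun i => le_antisymm (hcase i) (hAd i)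
        have hβ : 0 < d ⬝ᵥ d := dot_self_pos hdne
        set a' : Fin (r+2) → Fin p → ℝ := Fin.cons d (Fin.cons (-d) a) with ha'
        set c' : Fin (r+2) → ℝ := Fin.cons (d ⬝ᵥ x1) (Fin.cons (-(d ⬝ᵥ x1)) c) with hc'
        have hP' : ∀ x, (∀ i, c' i ≤ a' i ⬝ᵥ x) ↔
            ((∀ i, c i ≤ a i ⬝ᵥ x) ∧ d ⬝ᵥ x = d ⬝ᵥ x1) := by
          intro x
          constructor
          · intro h
            refine ⟨fun i => ?_, ?_⟩
            · have := h i.succ.succ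
              simpa [ha', hc', Fin.cons_succ] using this
            · have h0 := h 0
              have h1 := h ((0 : Fin (r+1)).succ)
              simp only [ha', hc', Fin.cons_zero, Fin.cons_succ, neg_dotProduct] at h0 h1
              linarith
          · rintro ⟨h, heq⟩ i
            refine Fin.cases ?_ (fun i => ?_) i
            · simp only [ha', hc', Fin.cons_zero]; linarith
            · refine Fin.cases ?_ (fun i' => ?_) i
              · simp only [ha', hc', Fin.cons_succ, Fin.cons_zero, neg_dotProduct]
                linarith
              · simpa [ha', hc', Fin.cons_succ] using h i'
        set V' : Submodule ℝ (Fin p → ℝ) := V ⊓ LinearMap.ker (dotLin d) with hV'def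
        have hdV' : d ∉ V' := by
          intro h
          have h2 := (Submodule.mem_inf.mp h).2
          rw [LinearMap.mem_ker] at h2
          have : d ⬝ᵥ d = 0 := h2
          linarith
        have hlt : V' < V := lt_of_le_of_ne inf_le_left (fun hEq => hdV' (by rw [hEq]; exact hdV))
        have hrank : Module.finrank ℝ V' ≤ n :=
          Nat.lt_succ_iff.mp (lt_of_lt_of_le (Submodule.finrank_lt_finrank_of_lt hlt) hVn)
        have hVnew : ∀ x y, (∀ i, c' i ≤ a' i ⬝ᵥ x) → (∀ i, c' i ≤ a' i ⬝ᵥ y) → x - y ∈ V' := by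
          intro x y hx hy
          obtain ⟨hx1', hx2'⟩ := (hP' x).mp hx
          obtain ⟨hy1', hy2'⟩ := (hP' y).mp hy
          refine Submodule.mem_inf.mpr ⟨hV x y hx1' hy1', ?_⟩
          rw [LinearMap.mem_ker]
          show d ⬝ᵥ (x - y) = 0
          rw [dotProduct_sub, hx2', hy2', sub_self]
        obtain ⟨z, hz1, hz2⟩ := ih V' hrank (r+2) a' c' hVnew
          ⟨x1, (hP' x1).mpr ⟨hx1, rfl⟩⟩
          ⟨L, fun x hx => hL x ((hP' x).mp hx).1⟩
        refine ⟨z, ((hP' z).mp hz1).1, fun x hx => ?_⟩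
        set t := (d ⬝ᵥ x1 - d ⬝ᵥ x) / (d ⬝ᵥ d) with htdef
        have hyF : ∀ i, c i ≤ a i ⬝ᵥ (x + t • d) := by
          intro i
          rw [dotProduct_add, dotProduct_smul]
          simp only [smul_eq_mul, haz i, mul_zero, add_zero]
          exact hx i
        have hyd : d ⬝ᵥ (x + t • d) = d ⬝ᵥ x1 := by
          rw [dotProduct_add, dotProduct_smul]
          simp only [smul_eq_mul, htdef]
          rw [div_mul_cancel₀ _ (ne_of_gt hβ)]
          ring
        have := hz2 (x + t • d) ((hP' _).mpr ⟨hyF, hyd⟩)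
        rwa [hobjd x t] at this
      · -- case B: some constraint strictly expands along d; slide to an active facet
        push_neg at hcase
        obtain ⟨i0, hi0⟩ := hcase
        set J : Finset (Fin r) := Finset.univ.filter (fun i => 0 < a i ⬝ᵥ d) with hJ
        have hJne : J.Nonempty := ⟨i0, by simp [hJ, hi0]⟩
        have hJpos : ∀ i ∈ J, 0 < a i ⬝ᵥ d := fun i hi => (Finset.mem_filter.mp hi).2
        have slide : ∀ x, (∀ i, c i ≤ a i ⬝ᵥ x) →
            ∃ y, (∀ i, c i ≤ a i ⬝ᵥ y) ∧ f y = f x ∧ ∃ i ∈ J, a i ⬝ᵥ y = c i := by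
          intro x hx
          set tx := J.inf' hJne (fun i => (a i ⬝ᵥ x - c i) / (a i ⬝ᵥ d)) with htx
          have htx0 : 0 ≤ tx := Finset.le_inf' hJne _ fun i hi =>
            div_nonneg (sub_nonneg.mpr (hx i)) (hJpos i hi).le
          refine ⟨x + (-tx) • d, ?_, hobjd x (-tx), ?_⟩
          · intro i
            rw [dotProduct_add, dotProduct_smul]
            simp only [smul_eq_mul, neg_mul]
            by_cases hi : i ∈ J
            · have h1 : tx ≤ (a i ⬝ᵥ x - c i) / (a i ⬝ᵥ d) := Finset.inf'_le _ hi
              have h2 : tx * (a i ⬝ᵥ d) ≤ a i ⬝ᵥ x - c i := (le_div_iff₀ (hJpos i hi)).mp h1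
              linarith
            · have hile : a i ⬝ᵥ d ≤ 0 := by
                by_contra hgt
                push_neg at hgt
                exact hi (Finset.mem_filter.mpr ⟨Finset.mem_univ i, hgt⟩)
              have h3 : tx * (a i ⬝ᵥ d) ≤ 0 := mul_nonpos_of_nonneg_of_nonpos htx0 hile
              have := hx i
              linarith
          · obtain ⟨i, hiJ, hieq⟩ := Finset.exists_mem_eq_inf' hJne
              (fun i => (a i ⬝ᵥ x - c i) / (a i ⬝ᵥ d))
            refine ⟨i, hiJ, ?_⟩
            rw [dotProduct_add, dotProduct_smul]
            simp only [smul_eq_mul, neg_mul]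
            have hmul : tx * (a i ⬝ᵥ d) = a i ⬝ᵥ x - c i := by
              rw [htx, hieq]
              exact div_mul_cancel₀ _ (ne_of_gt (hJpos i hiJ))
            linarith
        set K : Finset (Fin r) :=
          J.filter (fun i => ∃ y, (∀ i', c i' ≤ a i' ⬝ᵥ y) ∧ a i ⬝ᵥ y = c i) with hK
        have hKne : K.Nonempty := by
          obtain ⟨y, hyF, _, i, hiJ, hact⟩ := slide x1 hx1
          exact ⟨i, Finset.mem_filter.mpr ⟨hiJ, ⟨y, hyF, hact⟩⟩⟩
        have hmin : ∀ i : Fin r, ∃ z, i ∈ K →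
            ((∀ i', c i' ≤ a i' ⬝ᵥ z) ∧
              ∀ y, (∀ i', c i' ≤ a i' ⬝ᵥ y) → a i ⬝ᵥ y = c i → f z ≤ f y) := by
          intro i
          by_cases hiK : i ∈ K
          · have hiJ : i ∈ J := (Finset.mem_filter.mp hiK).1
            have hipos : 0 < a i ⬝ᵥ d := hJpos i hiJ
            obtain ⟨y0, hy0F, hy0act⟩ := (Finset.mem_filter.mp hiK).2
            set a' : Fin (r+1) → Fin p → ℝ := Fin.cons (-(a i)) a with ha'
            set c' : Fin (r+1) → ℝ := Fin.cons (-(c i)) c with hc'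
            have hP' : ∀ x, (∀ j, c' j ≤ a' j ⬝ᵥ x) ↔
                ((∀ j, c j ≤ a j ⬝ᵥ x) ∧ a i ⬝ᵥ x = c i) := by
              intro x
              constructor
              · intro h
                have hrest : ∀ j, c j ≤ a j ⬝ᵥ x := fun j => by
                  have := h j.succ
                  simpa [ha', hc', Fin.cons_succ] using this
                have h0 := h 0
                simp only [ha', hc', Fin.cons_zero, neg_dotProduct] at h0
                exact ⟨hrest, le_antisymm (by linarith) (hrest i)⟩
              · rintro ⟨h, heq⟩ j
                refine Fin.cases ?_ (fun j' => ?_) j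
                · simp only [ha', hc', Fin.cons_zero, neg_dotProduct]
                  linarith
                · simpa [ha', hc', Fin.cons_succ] using h j'
            set V' : Submodule ℝ (Fin p → ℝ) := V ⊓ LinearMap.ker (dotLin (a i)) with hV'def
            have hdV' : d ∉ V' := by
              intro h
              have h2 := (Submodule.mem_inf.mp h).2
              rw [LinearMap.mem_ker] at h2
              have : a i ⬝ᵥ d = 0 := h2
              linarith
            have hlt : V' < V :=
              lt_of_le_of_ne inf_le_left (fun hEq => hdV' (by rw [hEq]; exact hdV))
            have hrank : Module.finrank ℝ V' ≤ n :=
              Nat.lt_succ_iff.mp (lt_of_lt_of_le (Submodule.finrank_lt_finrank_of_lt hlt) hVn)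
            have hVnew : ∀ x y, (∀ j, c' j ≤ a' j ⬝ᵥ x) → (∀ j, c' j ≤ a' j ⬝ᵥ y) →
                x - y ∈ V' := by
              intro x y hx hy
              obtain ⟨hxr, hxe⟩ := (hP' x).mp hx
              obtain ⟨hyr, hye⟩ := (hP' y).mp hy
              refine Submodule.mem_inf.mpr ⟨hV x y hxr hyr, ?_⟩
              rw [LinearMap.mem_ker]
              show a i ⬝ᵥ (x - y) = 0
              rw [dotProduct_sub, hxe, hye, sub_self]
            obtain ⟨z, hz1, hz2⟩ := ih V' hrank (r+1) a' c' hVnew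
              ⟨y0, (hP' y0).mpr ⟨hy0F, hy0act⟩⟩
              ⟨L, fun x hx => hL x ((hP' x).mp hx).1⟩
            exact ⟨z, fun _ => ⟨((hP' z).mp hz1).1,
              fun y hy hact => hz2 y ((hP' y).mpr ⟨hy, hact⟩)⟩⟩
          · exact ⟨x1, fun h => absurd h hiK⟩
        choose zf hzf using hmin
        obtain ⟨imin, himinK, himin⟩ := Finset.exists_min_image K (fun i => f (zf i)) hKne
        refine ⟨zf imin, (hzf imin himinK).1, fun x hx => ?_⟩
        obtain ⟨y, hyF, hyobj, i, hiJ, hact⟩ := slide x hx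
        have hiK : i ∈ K := Finset.mem_filter.mpr ⟨hiJ, ⟨y, hyF, hact⟩⟩
        calc f (zf imin) ≤ f (zf i) := himin i hiK
          _ ≤ f y := (hzf i hiK).2 y hyF hact
          _ = f x := hyobj

end FrankWolfeAux

/-- A convex quadratic function bounded below on a nonempty polyhedron attains
its infimum there (Frank–Wolfe type result). -/
theorem quadratic_attains_min_on_polyhedron (p q : ℕ)
    (Q : Matrix (Fin p) (Fin p) ℝ) (hQ : Q.PosSemidef)
    (b : Fin p → ℝ) (A : Matrix (Fin q) (Fin p) ℝ) (c : Fin q → ℝ)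
    (F : Set (Fin p → ℝ))
    (hF : F = {x | ∀ i, c i ≤ A.mulVec x i})
    (hne : F.Nonempty)
    (obj : (Fin p → ℝ) → ℝ)
    (hobj : obj = fun x => (1 / 2) * (x ⬝ᵥ Q.mulVec x) + b ⬝ᵥ x)
    (hbdd : ∃ L : ℝ, ∀ x ∈ F, L ≤ obj x) :
    ∃ xstar ∈ F, ∀ x ∈ F, obj xstar ≤ obj x := by
  have hobj' : obj = objf Q b := by rw [hobj]; rfl
  have hmem : ∀ x, x ∈ F ↔ ∀ i, c i ≤ (fun j => A i j) ⬝ᵥ x := by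
    intro x
    rw [hF]
    rfl
  obtain ⟨L, hL⟩ := hbdd
  obtain ⟨x0, hx0⟩ := hne
  obtain ⟨xstar, hstar1, hstar2⟩ :=
    frank_wolfe_key p Q hQ b (Module.finrank ℝ (⊤ : Submodule ℝ (Fin p → ℝ)))
      ⊤ le_rfl q (fun i => A i) c
      (fun x y _ _ => Submodule.mem_top)
      ⟨x0, (hmem x0).mp hx0⟩
      ⟨L, fun x hx => by rw [← hobj']; exact hL x ((hmem x).mpr hx)⟩
  refine ⟨xstar, (hmem xstar).mpr hstar1, fun x hx => ?_⟩
  rw [hobj']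
  exact hstar2 x ((hmem x).mp hx)
end

section
/- Let x⁽¹⁾, …, x⁽ᵐ⁾ ∈ ℝⁿ and define X⁽ⁱ⁾ = Iₙ ⊗ (x⁽ⁱ⁾)ᵀ ∈ ℝ^{n×n²}. Then the matrix Σᵢ (X⁽ⁱ⁾)ᵀX⁽ⁱ⁾ − (1/m)(Σᵢ X⁽ⁱ⁾)ᵀ(Σᵢ X⁽ⁱ⁾) is positive semidefinite, and it is positive definite if the data matrix X (with rows (x⁽ⁱ⁾)ᵀ) has full column rank and the all-ones vector 1_m is not in the column space of X. -/
open Matrix Finset Kronecker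

lemma centered_sq_eq (m : ℕ) (hm : (m:ℝ) ≠ 0) (s : Fin m → ℝ) :
    (∑ i, (s i)^2) - (1/(m:ℝ)) * (∑ i, s i)^2
      = ∑ i, (s i - (∑ j, s j)/(m:ℝ))^2 := by
  have h : ∀ i : Fin m, (s i - (∑ j, s j)/(m:ℝ))^2
      = (s i)^2 - (2*(∑ j, s j)/(m:ℝ)) * s i + ((∑ j, s j)/(m:ℝ))^2 := by
    intro i; ring
  simp only [h, Finset.sum_add_distrib, Finset.sum_sub_distrib, ← Finset.mul_sum,
    Finset.sum_const, Finset.card_univ, Fintype.card_fin, nsmul_eq_mul]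
  field_simp
  ring

/-- With `X⁽ⁱ⁾ = Iₙ ⊗ (x⁽ⁱ⁾)ᵀ`, the matrix
`∑ᵢ (X⁽ⁱ⁾)ᵀX⁽ⁱ⁾ − (1/m)(∑ᵢ X⁽ⁱ⁾)ᵀ(∑ᵢ X⁽ⁱ⁾)` is positive semidefinite, and
positive definite when the data matrix `X` has full column rank and `1ₘ` is
not in its column space. -/
theorem centered_gram_posSemidef_and_posDef (m n : ℕ)
    (x : Fin m → Fin n → ℝ)
    (Xi : Fin m → Matrix (Fin n × Fin 1) (Fin n × Fin n) ℝ)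
    (hXi : ∀ i, Xi i = (1 : Matrix (Fin n) (Fin n) ℝ) ⊗ₖ Matrix.replicateRow (Fin 1) (x i))
    (X : Matrix (Fin m) (Fin n) ℝ) (hX : ∀ i, X i = x i)
    (M : Matrix (Fin n × Fin n) (Fin n × Fin n) ℝ)
    (hM : M = (∑ i, (Xi i)ᵀ * Xi i) -
      ((1 : ℝ) / m) • ((∑ i, Xi i)ᵀ * (∑ i, Xi i))) :
    M.PosSemidef ∧
      (X.rank = n → (¬∃ u : Fin n → ℝ, X.mulVec u = fun _ => 1) → M.PosDef) := by
  have hXiv : ∀ (i : Fin m) (v : Fin n × Fin n → ℝ) (p : Fin n) (k : Fin 1),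
      (Xi i *ᵥ v) (p, k) = X.mulVec (fun c => v (p, c)) i := by
    intro i v p k
    simp [hXi, Matrix.mulVec, dotProduct, Fintype.sum_prod_type,
      Matrix.one_apply, hX, ite_mul, mul_comm]
  have hSum : ∀ (v : Fin n × Fin n → ℝ), (∑ i, Xi i) *ᵥ v = ∑ i, Xi i *ᵥ v := by
    intro v; funext j
    simp [Matrix.mulVec, dotProduct, Matrix.sum_apply, Finset.sum_mul]
    rw [Finset.sum_comm]
  have hSum2 : ∀ (v : Fin n × Fin n → ℝ),
      (∑ i, (Xi i)ᵀ * Xi i) *ᵥ v = ∑ i, ((Xi i)ᵀ * Xi i) *ᵥ v := by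
    intro v; funext j
    simp [Matrix.mulVec, dotProduct, Matrix.sum_apply, Finset.sum_mul]
    rw [Finset.sum_comm]
  have e1 : ∀ (A : Matrix (Fin n × Fin 1) (Fin n × Fin n) ℝ) (v : Fin n × Fin n → ℝ),
      v ⬝ᵥ (Aᵀ * A) *ᵥ v = (A *ᵥ v) ⬝ᵥ (A *ᵥ v) := by
    intro A v
    rw [← Matrix.mulVec_mulVec, dotProduct_mulVec, Matrix.vecMul_transpose]
  have quad : ∀ v : Fin n × Fin n → ℝ, v ⬝ᵥ M *ᵥ v =
      ∑ p : Fin n, ((∑ i, (X.mulVec (fun c => v (p, c)) i)^2)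
        - (1/(m:ℝ)) * (∑ i, X.mulVec (fun c => v (p, c)) i)^2) := by
    intro v
    have dsum : ∀ (w : Fin m → (Fin n × Fin n → ℝ)) (v' : Fin n × Fin n → ℝ),
        v' ⬝ᵥ (∑ i, w i) = ∑ i, v' ⬝ᵥ w i := by
      intro w v'
      simp [dotProduct, Finset.sum_apply, Finset.mul_sum]
      rw [Finset.sum_comm]
    rw [hM, Matrix.sub_mulVec, dotProduct_sub, Matrix.smul_mulVec,
      dotProduct_smul, hSum2, dsum, e1, hSum]
    have t1 : ∀ i : Fin m, v ⬝ᵥ ((Xi i)ᵀ * Xi i) *ᵥ v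
        = ∑ p : Fin n, (X.mulVec (fun c => v (p, c)) i)^2 := by
      intro i
      rw [e1]
      simp [dotProduct, Fintype.sum_prod_type, hXiv, sq]
    have t2 : (∑ i, Xi i *ᵥ v) ⬝ᵥ (∑ i, Xi i *ᵥ v)
        = ∑ p : Fin n, (∑ i, X.mulVec (fun c => v (p, c)) i)^2 := by
      simp [dotProduct, Fintype.sum_prod_type, Finset.sum_apply, hXiv, sq]
    rw [t2]
    simp only [t1]
    rw [Finset.sum_comm (γ := Fin m)]
    rw [smul_eq_mul, Finset.mul_sum, ← Finset.sum_sub_distrib]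
  -- nonnegativity of each summand
  have nonneg : ∀ s : Fin m → ℝ,
      0 ≤ (∑ i, (s i)^2) - (1/(m:ℝ)) * (∑ i, s i)^2 := by
    intro s
    rcases Nat.eq_zero_or_pos m with hm | hm
    · subst hm; simp
    · have hm' : (m:ℝ) ≠ 0 := Nat.cast_ne_zero.mpr hm.ne'
      rw [centered_sq_eq m hm' s]
      exact Finset.sum_nonneg fun i _ => sq_nonneg _
  have herm : M.IsHermitian := by
    rw [hM]
    apply Matrix.IsHermitian.sub
    · show (∑ i, (Xi i)ᵀ * Xi i)ᴴ = _
      rw [Matrix.conjTranspose_sum]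
      exact Finset.sum_congr rfl fun i _ => by
        rw [← Matrix.conjTranspose_eq_transpose_of_trivial]
        exact Matrix.isHermitian_conjTranspose_mul_self (Xi i)
    · show ((1/(m:ℝ)) • ((∑ i, Xi i)ᵀ * (∑ i, Xi i)))ᴴ = _
      rw [Matrix.conjTranspose_smul, star_trivial]
      congr 1
      have h := Matrix.isHermitian_conjTranspose_mul_self (∑ i, Xi i)
      rwa [Matrix.conjTranspose_eq_transpose_of_trivial] at h
  have psd : M.PosSemidef := by
    refine Matrix.posSemidef_iff_dotProduct_mulVec.mpr ⟨herm, fun v => ?_⟩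
    rw [star_trivial, quad v]
    exact Finset.sum_nonneg fun p _ => nonneg _
  refine ⟨psd, fun hrank hone => ?_⟩
  -- m > 0
  have hm : 0 < m := by
    rcases Nat.eq_zero_or_pos m with h0 | h0
    · subst h0
      exact absurd ⟨0, funext fun i => i.elim0⟩ hone
    · exact h0
  have hm' : (m:ℝ) ≠ 0 := Nat.cast_ne_zero.mpr hm.ne'
  -- injectivity of mulVec
  have hinj : Function.Injective X.mulVec := by
    have hker : LinearMap.ker X.mulVecLin = ⊥ := by
      have h2 := LinearMap.finrank_range_add_finrank_ker X.mulVecLin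
      rw [Module.finrank_fin_fun] at h2
      rw [Matrix.rank] at hrank
      have : Module.finrank ℝ (LinearMap.ker X.mulVecLin) = 0 := by omega
      exact Submodule.finrank_eq_zero.mp this
    intro u w h
    have := LinearMap.ker_eq_bot.mp hker
    exact this (by simpa [Matrix.mulVecLin_apply] using h)
  refine Matrix.posDef_iff_dotProduct_mulVec.mpr ⟨herm, fun v hv => ?_⟩
  rw [star_trivial, quad v]
  obtain ⟨⟨p0, c0⟩, hpc⟩ := Function.ne_iff.mp hv
  have hu : (fun c => v (p0, c)) ≠ 0 := fun h => hpc (congrFun h c0)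
  apply Finset.sum_pos' (fun p _ => nonneg _) ⟨p0, Finset.mem_univ _, ?_⟩
  set s : Fin m → ℝ := X.mulVec (fun c => v (p0, c)) with hs
  rw [centered_sq_eq m hm' s]
  set μ : ℝ := (∑ j, s j)/(m:ℝ) with hμ
  have hne : ∃ i, s i ≠ μ := by
    by_contra hall
    push_neg at hall
    by_cases hμ0 : μ = 0
    · apply hu
      apply hinj
      rw [Matrix.mulVec_zero, ← hs]
      funext i
      rw [hall i, hμ0]
      simp
    · apply hone
      refine ⟨μ⁻¹ • (fun c => v (p0, c)), ?_⟩
      funext i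
      rw [Matrix.mulVec_smul, ← hs, Pi.smul_apply, hall i, smul_eq_mul,
        inv_mul_cancel₀ hμ0]
  obtain ⟨i0, hi0⟩ := hne
  exact Finset.sum_pos' (fun i _ => sq_nonneg _)
    ⟨i0, Finset.mem_univ _, by
      have h := sub_ne_zero.mpr hi0
      positivity⟩
end
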